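/- Let r > 0 and define the entire function B_r : ℂ → ℂ by B_r(z) = √r·∑_{k∈ℤ} exp(−π·(rk)² + 2π·z·(rk) − (π/2)·z²) (the Bargmann transform of the Dirac comb Ш_r). Then for every z ∈ ℂ and every w ∈ ℂ of the form w = r·j + i·k/r with j, k ∈ ℤ: exp(−π·|z − w|²)·|B_r(z − w)|² = exp(−π·|z|²)·|B_r(z)|². -/

import Mathlib

/-- The Bargmann transform of the Dirac comb `Ш_r`:
`B_r(z) = √r ∑_{k∈ℤ} exp(-π(rk)² + 2πz(rk) - (π/2)z²)`. -/
noncomputable def bargmannComb (r : ℝ) (z : ℂ) : ℂ :=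
  (Real.sqrt r : ℂ) * ∑' k : ℤ,
    Complex.exp (-(Real.pi : ℂ) * ((r * k : ℝ) : ℂ) ^ 2
      + 2 * (Real.pi : ℂ) * z * ((r * k : ℝ) : ℂ) - (Real.pi : ℂ) / 2 * z ^ 2)

set_option maxHeartbeats 1000000 in
lemma barg_key (r : ℝ) (hr : 0 < r) (z : ℂ) (j k : ℤ) (w : ℂ)
    (hw : w = ((r * j : ℝ) : ℂ) + Complex.I * (((k : ℝ) / r : ℝ) : ℂ)) :
    bargmannComb r (z - w) =
      Complex.exp ((Real.pi : ℂ) * ((r : ℂ) * j) ^ 2 - 2 * Real.pi * ((r : ℂ) * j) * z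
        + Real.pi * w * z - (Real.pi : ℂ) / 2 * w ^ 2) * bargmannComb r z := by
  set c : ℂ := (Real.pi : ℂ) * ((r : ℂ) * j) ^ 2 - 2 * Real.pi * ((r : ℂ) * j) * z
        + Real.pi * w * z - (Real.pi : ℂ) / 2 * w ^ 2 with hc
  have hr0 : (r : ℂ) ≠ 0 := by exact_mod_cast hr.ne'
  unfold bargmannComb
  have hterm : ∀ n : ℤ,
      Complex.exp (-(Real.pi : ℂ) * ((r * n : ℝ) : ℂ) ^ 2
        + 2 * (Real.pi : ℂ) * (z - w) * ((r * n : ℝ) : ℂ) - (Real.pi : ℂ) / 2 * (z - w) ^ 2)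
      = Complex.exp c *
        Complex.exp (-(Real.pi : ℂ) * ((r * ((n + j : ℤ)) : ℝ) : ℂ) ^ 2
          + 2 * (Real.pi : ℂ) * z * ((r * ((n + j : ℤ)) : ℝ) : ℂ) - (Real.pi : ℂ) / 2 * z ^ 2) := by
    intro n
    rw [← Complex.exp_add]
    rw [show (-(Real.pi : ℂ) * ((r * n : ℝ) : ℂ) ^ 2
        + 2 * (Real.pi : ℂ) * (z - w) * ((r * n : ℝ) : ℂ) - (Real.pi : ℂ) / 2 * (z - w) ^ 2)
      = (c + (-(Real.pi : ℂ) * ((r * ((n + j : ℤ)) : ℝ) : ℂ) ^ 2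
          + 2 * (Real.pi : ℂ) * z * ((r * ((n + j : ℤ)) : ℝ) : ℂ) - (Real.pi : ℂ) / 2 * z ^ 2))
        + (((-(n * k) : ℤ) : ℂ)) * (2 * Real.pi * Complex.I) from by
        subst hw; rw [hc]
        have hs : ((((k : ℝ) / r : ℝ)) : ℂ) * r = k := by
          push_cast; field_simp
        push_cast at hs ⊢
        linear_combination (-2 * (Real.pi : ℂ) * Complex.I * (n : ℂ)) * hs]
    rw [Complex.exp_add, Complex.exp_int_mul_two_pi_mul_I, mul_one]
  rw [tsum_congr hterm, tsum_mul_left]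
  have hre2 : (∑' n : ℤ, Complex.exp (-(Real.pi : ℂ) * ((r * ((n + j : ℤ)) : ℝ) : ℂ) ^ 2
          + 2 * (Real.pi : ℂ) * z * ((r * ((n + j : ℤ)) : ℝ) : ℂ) - (Real.pi : ℂ) / 2 * z ^ 2))
      = ∑' m : ℤ, Complex.exp (-(Real.pi : ℂ) * ((r * m : ℝ) : ℂ) ^ 2
          + 2 * (Real.pi : ℂ) * z * ((r * m : ℝ) : ℂ) - (Real.pi : ℂ) / 2 * z ^ 2) := by
    have h := (Equiv.addRight j).tsum_eq
      (fun m : ℤ => Complex.exp (-(Real.pi : ℂ) * ((r * m : ℝ) : ℂ) ^ 2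
          + 2 * (Real.pi : ℂ) * z * ((r * m : ℝ) : ℂ) - (Real.pi : ℂ) / 2 * z ^ 2))
    simp only [Equiv.coe_addRight] at h
    exact h
  rw [hre2]
  ring

/-- The Bargmann mass `e^{-π|z|²}|𝔅Ш_r(z)|²` is invariant under translations by the
lattice `rℤ + i(1/r)ℤ`. -/
theorem stmt13 (r : ℝ) (hr : 0 < r) (z : ℂ) (j k : ℤ) (w : ℂ)
    (hw : w = ((r * j : ℝ) : ℂ) + Complex.I * (((k : ℝ) / r : ℝ) : ℂ)) :
    Real.exp (-Real.pi * ‖z - w‖ ^ 2) * ‖bargmannComb r (z - w)‖ ^ 2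
      = Real.exp (-Real.pi * ‖z‖ ^ 2) * ‖bargmannComb r z‖ ^ 2 := by

  have hB := barg_key r hr z j k w hw
  set c : ℂ := (Real.pi : ℂ) * ((r : ℂ) * j) ^ 2 - 2 * Real.pi * ((r : ℂ) * j) * z
        + Real.pi * w * z - (Real.pi : ℂ) / 2 * w ^ 2 with hc
  rw [hB, norm_mul, Complex.norm_exp, mul_pow, ← mul_assoc]
  congr 1
  rw [← Real.exp_nat_mul, ← Real.exp_add]
  congr 1
  have h1 : ‖z - w‖ ^ 2 = (z - w).re ^ 2 + (z - w).im ^ 2 := by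
    rw [Complex.sq_norm, Complex.normSq_apply]; ring
  have h2 : ‖z‖ ^ 2 = z.re ^ 2 + z.im ^ 2 := by
    rw [Complex.sq_norm, Complex.normSq_apply]; ring
  have hre : w.re = r * j := by simp [hw]
  have him : w.im = (k : ℝ) / r := by simp [hw]
  have hcre : c.re = Real.pi * (r * j) ^ 2 - 2 * Real.pi * (r * j) * z.re
      + Real.pi * (w.re * z.re - w.im * z.im) - Real.pi / 2 * (w.re ^ 2 - w.im ^ 2) := by
    simp [hc, Complex.sub_re, Complex.add_re, Complex.mul_re, Complex.mul_im,
      Complex.ofReal_re, Complex.ofReal_im, Complex.div_re, Complex.normSq_apply, sq]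
    ring
  rw [h1, h2, hcre, Complex.sub_re, Complex.sub_im, hre, him]
  push_cast
  ring
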